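/- arXiv:1402.1714 — 5 statements merged into one kernel-verified Lean document; each statement's English description precedes it below -/
import Mathlib

section
/- Let i : B → C be a regular embedding of complete Boolean algebras with associated retraction π_i, and let c ∈ C. Then the map i_c : B↾π_i(c) → C↾c defined by i_c(b) = i(b) ∧ c is a regular embedding of the complete Boolean algebras B↾π_i(c) and C↾c, and its associated retraction is the restriction of π_i: for every d ≤ c, π_{i_c}(d) = π_i(d). -/
/-- Restriction: Let `i : B → C` be a regular embedding of complete
Boolean algebras with associated retraction `π`, and `c ∈ C`.  Then the map
`i_c : B↾π c → C↾c`, `b ↦ i b ⊓ c`, is a regular embedding of the restriction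
algebras `B↾π c = {x : x ≤ π c}` and `C↾c = {y : y ≤ c}` (it maps into `C↾c`, is
injective, preserves arbitrary suprema, binary meets, relative complements and the
top elements), and its associated retraction is the restriction of `π`: for every
`d ≤ c`, the infimum computed in `B↾π c` of `{x ≤ π c : i_c x ≥ d}` equals `π d`. -/
theorem stmt6 {B C : Type*} [CompleteBooleanAlgebra B] [CompleteBooleanAlgebra C]
    (i : B → C) (π : C → B)
    (hinj : Function.Injective i)
    (hsup : ∀ S : Set B, i (sSup S) = sSup (i '' S))
    (hinf : ∀ a b : B, i (a ⊓ b) = i a ⊓ i b)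
    (hcompl : ∀ b : B, i bᶜ = (i b)ᶜ)
    (htop : i (⊤ : B) = ⊤) (hbot : i (⊥ : B) = ⊥)
    (hπ : ∀ c : C, π c = sInf {b : B | c ≤ i b})
    (c : C) :
    (∀ x : B, x ≤ π c → i x ⊓ c ≤ c) ∧
    (∀ x y : B, x ≤ π c → y ≤ π c → i x ⊓ c = i y ⊓ c → x = y) ∧
    (∀ S : Set B, S ⊆ Set.Iic (π c) →
      i (sSup S) ⊓ c = sSup ((fun x => i x ⊓ c) '' S)) ∧
    (∀ x y : B, x ≤ π c → y ≤ π c → i (x ⊓ y) ⊓ c = (i x ⊓ c) ⊓ (i y ⊓ c)) ∧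
    (∀ x : B, x ≤ π c → i (π c ⊓ xᶜ) ⊓ c = c ⊓ (i x ⊓ c)ᶜ) ∧
    (i (π c) ⊓ c = c) ∧
    (∀ d : C, d ≤ c → sInf {x : B | x ≤ π c ∧ d ≤ i x ⊓ c} = π d) := by
  -- i preserves binary joins
  have hjoin : ∀ a b : B, i (a ⊔ b) = i a ⊔ i b := by
    intro a b
    have h : a ⊔ b = (aᶜ ⊓ bᶜ)ᶜ := by simp
    rw [h, hcompl, hinf, hcompl, hcompl, compl_inf, compl_compl, compl_compl]
  -- i preserves arbitrary infima
  have hiInf : ∀ S : Set B, i (sInf S) = sInf (i '' S) := by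
    intro S
    have h1 : sInf S = (sSup (compl '' S))ᶜ := by
      rw [compl_sSup]
      simp only [iInf_image, compl_compl]
      rw [sInf_eq_iInf]
    rw [h1, hcompl, hsup, compl_sSup]
    simp only [iInf_image, hcompl, compl_compl]
    rw [sInf_image]
  -- d ≤ i (π d)
  have hle : ∀ d : C, d ≤ i (π d) := by
    intro d
    rw [hπ, hiInf, le_sInf_iff]
    rintro x ⟨b, hb, rfl⟩
    exact hb
  have hic : i (π c) ⊓ c = c := inf_eq_right.mpr (hle c)
  -- retraction identity: π (i x ⊓ c) = x when x ≤ π c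
  have key : ∀ x : B, x ≤ π c → π (i x ⊓ c) = x := by
    intro x hx
    rw [hπ]
    apply le_antisymm
    · exact sInf_le inf_le_left
    · rw [le_sInf_iff]
      intro b hb
      simp only [Set.mem_setOf_eq] at hb
      have h1 : c ≤ i b ⊔ (i x)ᶜ := by
        rw [← himp_eq]
        exact le_himp_iff.mpr (by rwa [inf_comm])
      have h2 : c ≤ i (b ⊔ xᶜ) := by rwa [hjoin, hcompl]
      have h3 : π c ≤ b ⊔ xᶜ := by
        rw [hπ]; exact sInf_le h2
      have h4 : x ≤ b ⊔ xᶜ := hx.trans h3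
      calc x = x ⊓ (b ⊔ xᶜ) := (inf_eq_left.mpr h4).symm
        _ = (x ⊓ b) ⊔ (x ⊓ xᶜ) := inf_sup_left x b xᶜ
        _ = x ⊓ b := by rw [inf_compl_self, sup_bot_eq]
        _ ≤ b := inf_le_right
  refine ⟨fun x _ => inf_le_right, ?_, ?_, ?_, ?_, hic, ?_⟩
  · intro x y hx hy h
    rw [← key x hx, ← key y hy, h]
  · intro S _
    rw [hsup, sSup_inf_eq, sSup_image]
    simp only [iSup_image]
  · intro x y _ _
    rw [hinf, inf_inf_inf_comm, inf_idem]
  · intro x _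
    rw [hinf, hcompl, compl_inf, inf_sup_left, inf_compl_self, sup_bot_eq,
      inf_right_comm, hic, inf_comm]
  · intro d hd
    apply le_antisymm
    · apply sInf_le
      constructor
      · rw [hπ c, hπ d]
        exact sInf_le_sInf fun b hb => hd.trans hb
      · exact le_inf (hle d) hd
    · rw [hπ d]
      apply sInf_le_sInf
      rintro x ⟨-, hx⟩
      exact hx.trans inf_le_left
end

section
/- Let i : B → C be a regular embedding of complete Boolean algebras with associated retraction π_i. Then the map π* : X_C → X_B, G ↦ π_i[G], is well defined (π_i[G] is an ultrafilter on B for every ultrafilter G on C), continuous, and open; moreover π*[N_c] = N_{π_i(c)} for every c ∈ C (in particular π* is surjective). -/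
/-- An ultrafilter on a Boolean algebra: a (proper) filter `G` such that for every
`b`, `b ∈ G` or `bᶜ ∈ G`. -/
def IsUltraOn {B : Type*} [BooleanAlgebra B] (G : Set B) : Prop :=
  G.Nonempty ∧ (∀ a ∈ G, ∀ b : B, a ≤ b → b ∈ G) ∧ (∀ a ∈ G, ∀ b ∈ G, a ⊓ b ∈ G) ∧
    (⊥ : B) ∉ G ∧ ∀ b : B, b ∈ G ∨ bᶜ ∈ G

/-- The Stone space of a Boolean algebra: the set of its ultrafilters. -/
def StoneSp (B : Type*) [BooleanAlgebra B] : Type _ := {G : Set B // IsUltraOn G}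

/-- The Stone topology, generated by the basic sets `N_b = {G : b ∈ G}`. -/
instance StoneSp.topologicalSpace (B : Type*) [BooleanAlgebra B] :
    TopologicalSpace (StoneSp B) :=
  TopologicalSpace.generateFrom {U : Set (StoneSp B) | ∃ b : B, U = {G : StoneSp B | b ∈ G.1}}

section Aux

variable {B C : Type*} [CompleteBooleanAlgebra B] [CompleteBooleanAlgebra C]
  {i : B → C} {π : C → B}

lemma aux_mono (hinf : ∀ a b : B, i (a ⊓ b) = i a ⊓ i b) {a b : B} (h : a ≤ b) :
    i a ≤ i b := by
  have h1 : i a = i a ⊓ i b := by rw [← hinf, inf_eq_left.2 h]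
  rw [h1]; exact inf_le_right

lemma aux_reflect (hinj : Function.Injective i)
    (hinf : ∀ a b : B, i (a ⊓ b) = i a ⊓ i b) {a b : B} (h : i a ≤ i b) : a ≤ b := by
  have h1 : i (a ⊓ b) = i a := by rw [hinf]; exact inf_eq_left.2 h
  exact inf_eq_left.1 (hinj h1)

lemma aux_sInf (hsup : ∀ S : Set B, i (sSup S) = sSup (i '' S))
    (hcompl : ∀ b : B, i bᶜ = (i b)ᶜ) (S : Set B) : i (sInf S) = sInf (i '' S) := by
  have h1 : sInf S = (sSup ((Compl.compl : B → B) '' S))ᶜ := by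
    rw [← compl_sInf', compl_compl]
  rw [h1, hcompl, hsup, compl_sSup']
  congr 1
  rw [Set.image_image, Set.image_image]
  apply Set.image_congr'
  intro x
  rw [hcompl, compl_compl]

lemma aux_le_iπ (hsup : ∀ S : Set B, i (sSup S) = sSup (i '' S))
    (hcompl : ∀ b : B, i bᶜ = (i b)ᶜ)
    (hπ : ∀ c : C, π c = sInf {b : B | c ≤ i b}) (c : C) : c ≤ i (π c) := by
  rw [hπ, aux_sInf hsup hcompl]
  apply le_sInf
  rintro x ⟨b, hb, rfl⟩
  exact hb

lemma aux_adj (hinf : ∀ a b : B, i (a ⊓ b) = i a ⊓ i b)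
    (hsup : ∀ S : Set B, i (sSup S) = sSup (i '' S))
    (hcompl : ∀ b : B, i bᶜ = (i b)ᶜ)
    (hπ : ∀ c : C, π c = sInf {b : B | c ≤ i b}) {c : C} {b : B} :
    π c ≤ b ↔ c ≤ i b := by
  constructor
  · intro h
    exact le_trans (aux_le_iπ hsup hcompl hπ c) (aux_mono hinf h)
  · intro h
    rw [hπ]
    exact sInf_le h

lemma aux_pi_i (hinj : Function.Injective i)
    (hinf : ∀ a b : B, i (a ⊓ b) = i a ⊓ i b)
    (hπ : ∀ c : C, π c = sInf {b : B | c ≤ i b}) (b : B) : π (i b) = b := by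
  apply le_antisymm
  · rw [hπ]; exact sInf_le (le_refl (i b))
  · rw [hπ]
    apply le_sInf
    intro b' hb'
    exact aux_reflect hinj hinf hb'

lemma aux_image (hinj : Function.Injective i)
    (hinf : ∀ a b : B, i (a ⊓ b) = i a ⊓ i b)
    (hsup : ∀ S : Set B, i (sSup S) = sSup (i '' S))
    (hcompl : ∀ b : B, i bᶜ = (i b)ᶜ)
    (hπ : ∀ c : C, π c = sInf {b : B | c ≤ i b}) {G : Set C}
    (hup : ∀ a ∈ G, ∀ x : C, a ≤ x → x ∈ G) :
    π '' G = {b : B | i b ∈ G} := by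
  ext b
  constructor
  · rintro ⟨c, hc, rfl⟩
    exact hup c hc _ (aux_le_iπ hsup hcompl hπ c)
  · intro hb
    exact ⟨i b, hb, aux_pi_i hinj hinf hπ b⟩

/-- The key extension lemma: any ultrafilter `H` on `B` containing `π c` is the
image of an ultrafilter on `C` containing `c`. -/
lemma aux_exists (hinj : Function.Injective i)
    (hinf : ∀ a b : B, i (a ⊓ b) = i a ⊓ i b)
    (hsup : ∀ S : Set B, i (sSup S) = sSup (i '' S))
    (hcompl : ∀ b : B, i bᶜ = (i b)ᶜ)
    (hπ : ∀ c : C, π c = sInf {b : B | c ≤ i b})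
    (H : Set B) (hH : IsUltraOn H) (c : C) (hc : π c ∈ H) :
    ∃ G : Set C, IsUltraOn G ∧ c ∈ G ∧ π '' G = H := by
  obtain ⟨⟨b₀, hb₀⟩, hup, hmeet, hbotH, hprime⟩ := hH
  set F : Set C := {x | ∃ b ∈ H, c ⊓ i b ≤ x} with hF
  -- F is proper
  have hbotF : (⊥ : C) ∉ F := by
    rintro ⟨b, hb, hle⟩
    have h1 : c ⊓ i b = ⊥ := le_bot_iff.1 hle
    have h2 : c ≤ (i b)ᶜ := le_compl_iff_disjoint_right.2 (disjoint_iff.2 h1)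
    rw [← hcompl] at h2
    have h3 : π c ≤ bᶜ := by rw [hπ]; exact sInf_le h2
    have h4 : bᶜ ∈ H := hup _ hc _ h3
    have h5 : b ⊓ bᶜ ∈ H := hmeet _ hb _ h4
    rw [inf_compl_eq_bot] at h5
    exact hbotH h5
  set S : Set (Set C) := {G | F ⊆ G ∧ (∀ a ∈ G, ∀ x : C, a ≤ x → x ∈ G) ∧
    (∀ a ∈ G, ∀ b ∈ G, a ⊓ b ∈ G) ∧ (⊥ : C) ∉ G} with hS
  have hFS : F ∈ S := by
    refine ⟨subset_rfl, ?_, ?_, hbotF⟩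
    · rintro a ⟨b, hb, hle⟩ x hax
      exact ⟨b, hb, le_trans hle hax⟩
    · rintro a ⟨b₁, hb₁, h₁⟩ a' ⟨b₂, hb₂, h₂⟩
      refine ⟨b₁ ⊓ b₂, hmeet _ hb₁ _ hb₂, ?_⟩
      rw [hinf]
      calc c ⊓ (i b₁ ⊓ i b₂) ≤ (c ⊓ i b₁) ⊓ (c ⊓ i b₂) :=
            le_inf (inf_le_inf_left c inf_le_left) (inf_le_inf_left c inf_le_right)
        _ ≤ a ⊓ a' := inf_le_inf h₁ h₂
  have hchaincond : ∀ ch ⊆ S, IsChain (· ⊆ ·) ch → ch.Nonempty →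
      ∃ ub ∈ S, ∀ s ∈ ch, s ⊆ ub := by
    intro ch hch hchain hne
    refine ⟨⋃₀ ch, ⟨?_, ?_, ?_, ?_⟩, fun s hs => Set.subset_sUnion_of_mem hs⟩
    · obtain ⟨g, hg⟩ := hne
      exact subset_trans (hch hg).1 (Set.subset_sUnion_of_mem hg)
    · rintro a ⟨g, hg, hag⟩ x hax
      exact ⟨g, hg, (hch hg).2.1 _ hag _ hax⟩
    · rintro a ⟨g₁, hg₁, hag⟩ b ⟨g₂, hg₂, hbg⟩
      rcases hchain.total hg₁ hg₂ with h | h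
      · exact ⟨g₂, hg₂, (hch hg₂).2.2.1 _ (h hag) _ hbg⟩
      · exact ⟨g₁, hg₁, (hch hg₁).2.2.1 _ hag _ (h hbg)⟩
    · rintro ⟨g, hg, hbg⟩
      exact (hch hg).2.2.2 hbg
  obtain ⟨M, hFM, hMS, hMmax⟩ : ∃ M, F ⊆ M ∧ M ∈ S ∧ ∀ G ∈ S, M ⊆ G → G ⊆ M := by
    obtain ⟨M, hFM, hMmax⟩ := zorn_subset_nonempty S hchaincond F hFS
    exact ⟨M, hFM, hMmax.1, fun G hG hMG => hMmax.2 hG hMG⟩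
  obtain ⟨hFM', hMup, hMmeet, hMbot⟩ := hMS
  have hcM : c ∈ M := hFM ⟨b₀, hb₀, inf_le_left⟩
  -- M is prime (an ultrafilter)
  have hMprime : ∀ x : C, x ∈ M ∨ xᶜ ∈ M := by
    intro x
    by_cases hx : x ∈ M
    · exact Or.inl hx
    right
    have hg : ∃ g ∈ M, g ⊓ x = ⊥ := by
      by_contra hng
      push_neg at hng
      set M' : Set C := {y | ∃ g ∈ M, g ⊓ x ≤ y} with hM'
      have hM'S : M' ∈ S := by
        refine ⟨fun y hy => ⟨y, hFM hy, inf_le_left⟩, ?_, ?_, ?_⟩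
        · rintro a ⟨g, hg, hle⟩ z haz
          exact ⟨g, hg, le_trans hle haz⟩
        · rintro a ⟨g₁, hg₁, h₁⟩ b ⟨g₂, hg₂, h₂⟩
          refine ⟨g₁ ⊓ g₂, hMmeet _ hg₁ _ hg₂, ?_⟩
          calc (g₁ ⊓ g₂) ⊓ x ≤ (g₁ ⊓ x) ⊓ (g₂ ⊓ x) :=
                le_inf (inf_le_inf_right x inf_le_left) (inf_le_inf_right x inf_le_right)
            _ ≤ a ⊓ b := inf_le_inf h₁ h₂
        · rintro ⟨g, hg, hle⟩
          exact hng g hg (le_bot_iff.1 hle)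
      have hMM' : M ⊆ M' := fun g hg => ⟨g, hg, inf_le_left⟩
      have hxM' : x ∈ M' := ⟨c, hcM, inf_le_right⟩
      exact hx (hMmax M' hM'S hMM' hxM')
    obtain ⟨g, hgM, hgx⟩ := hg
    have hgle : g ≤ xᶜ := le_compl_iff_disjoint_right.2 (disjoint_iff.2 hgx)
    exact hMup _ hgM _ hgle
  have hMultra : IsUltraOn M := ⟨⟨c, hcM⟩, hMup, hMmeet, hMbot, hMprime⟩
  refine ⟨M, hMultra, hcM, ?_⟩
  rw [aux_image hinj hinf hsup hcompl hπ hMup]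
  ext b
  constructor
  · intro hb
    by_contra hbH
    rcases hprime b with h | h
    · exact hbH h
    have h1 : i bᶜ ∈ M := hFM ⟨bᶜ, h, inf_le_right⟩
    have h2 : i b ⊓ i bᶜ ∈ M := hMmeet _ hb _ h1
    rw [hcompl, inf_compl_eq_bot] at h2
    exact hMbot h2
  · intro hb
    exact hFM ⟨b, hb, inf_le_right⟩

end Aux

/-- For a regular embedding `i : B → C` of complete Boolean algebras with
associated retraction `π`, the map `π* : X_C → X_B`, `G ↦ π[G]`, is well defined
(`π[G]` is an ultrafilter on `B` whenever `G` is an ultrafilter on `C`), continuous and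
open, and `π*[N_c] = N_{π c}` for every `c ∈ C`; in particular `π*` is surjective. -/
theorem stmt7 {B C : Type*} [CompleteBooleanAlgebra B] [CompleteBooleanAlgebra C]
    (i : B → C) (π : C → B)
    (hinj : Function.Injective i)
    (hsup : ∀ S : Set B, i (sSup S) = sSup (i '' S))
    (hinf : ∀ a b : B, i (a ⊓ b) = i a ⊓ i b)
    (hcompl : ∀ b : B, i bᶜ = (i b)ᶜ)
    (htop : i (⊤ : B) = ⊤) (hbot : i (⊥ : B) = ⊥)
    (hπ : ∀ c : C, π c = sInf {b : B | c ≤ i b}) :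
    (∀ G : Set C, IsUltraOn G → IsUltraOn (π '' G)) ∧
    (∃ f : StoneSp C → StoneSp B, ∀ G : StoneSp C, (f G).1 = π '' G.1) ∧
    (∀ f : StoneSp C → StoneSp B, (∀ G : StoneSp C, (f G).1 = π '' G.1) →
      Continuous f ∧ IsOpenMap f ∧
      (∀ c : C, f '' {G : StoneSp C | c ∈ G.1} = {H : StoneSp B | π c ∈ H.1}) ∧
      Function.Surjective f) := by
  have part1 : ∀ G : Set C, IsUltraOn G → IsUltraOn (π '' G) := by
    rintro G ⟨⟨c₀, hc₀⟩, hup, hmeet, hbotG, hprime⟩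
    rw [aux_image hinj hinf hsup hcompl hπ hup]
    refine ⟨⟨⊤, ?_⟩, ?_, ?_, ?_, ?_⟩
    · show i ⊤ ∈ G
      rw [htop]
      exact hup _ hc₀ _ le_top
    · intro a ha b hab
      exact hup _ ha _ (aux_mono hinf hab)
    · intro a ha b hb
      show i (a ⊓ b) ∈ G
      rw [hinf]
      exact hmeet _ ha _ hb
    · intro h
      have : i (⊥ : B) ∈ G := h
      rw [hbot] at this
      exact hbotG this
    · intro b
      rcases hprime (i b) with h | h
      · exact Or.inl h
      · right
        show i bᶜ ∈ G
        rw [hcompl]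
        exact h
  refine ⟨part1, ⟨fun G => ⟨π '' G.1, part1 _ G.2⟩, fun G => rfl⟩, ?_⟩
  intro f hf
  have hmem : ∀ (G : StoneSp C) (b : B), b ∈ (f G).1 ↔ i b ∈ G.1 := by
    intro G b
    rw [hf, aux_image hinj hinf hsup hcompl hπ G.2.2.1]
    rfl
  have hcont : Continuous f := by
    rw [StoneSp.topologicalSpace, continuous_generateFrom_iff]
    rintro U ⟨b, rfl⟩
    have h1 : f ⁻¹' {H : StoneSp B | b ∈ H.1} = {G : StoneSp C | i b ∈ G.1} := by
      ext G
      simp only [Set.mem_preimage, Set.mem_setOf_eq, hmem]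
    rw [h1]
    exact TopologicalSpace.isOpen_generateFrom_of_mem ⟨i b, rfl⟩
  have himg : ∀ c : C, f '' {G : StoneSp C | c ∈ G.1} = {H : StoneSp B | π c ∈ H.1} := by
    intro c
    ext H
    constructor
    · rintro ⟨G, hG, rfl⟩
      show π c ∈ (f G).1
      rw [hf]
      exact ⟨c, hG, rfl⟩
    · intro hH
      obtain ⟨G, hGu, hcG, hπG⟩ :=
        aux_exists hinj hinf hsup hcompl hπ H.1 H.2 c hH
      refine ⟨⟨G, hGu⟩, hcG, ?_⟩
      apply Subtype.ext
      erw [hf]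
      exact hπG
  have hbasis : TopologicalSpace.IsTopologicalBasis
      {U : Set (StoneSp C) | ∃ c : C, U = {G : StoneSp C | c ∈ G.1}} := by
    refine ⟨?_, ?_, rfl⟩
    · rintro U ⟨c₁, rfl⟩ V ⟨c₂, rfl⟩ G ⟨h1, h2⟩
      refine ⟨{G : StoneSp C | c₁ ⊓ c₂ ∈ G.1}, ⟨c₁ ⊓ c₂, rfl⟩, G.2.2.2.1 _ h1 _ h2, ?_⟩
      intro G' hG'
      exact ⟨G'.2.2.1 _ hG' _ inf_le_left, G'.2.2.1 _ hG' _ inf_le_right⟩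
    · apply Set.sUnion_eq_univ_iff.2
      intro G
      obtain ⟨c₀, hc₀⟩ := G.2.1
      exact ⟨{G : StoneSp C | ⊤ ∈ G.1}, ⟨⊤, rfl⟩, G.2.2.1 _ hc₀ _ le_top⟩
  have hopen : IsOpenMap f := by
    intro U hU
    obtain ⟨S₀, hS₀, rfl⟩ := hbasis.open_eq_sUnion hU
    rw [Set.image_sUnion]
    apply isOpen_sUnion
    rintro s ⟨t, ht, rfl⟩
    obtain ⟨c, rfl⟩ := hS₀ ht
    rw [himg c]
    exact TopologicalSpace.isOpen_generateFrom_of_mem ⟨π c, rfl⟩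
  refine ⟨hcont, hopen, himg, ?_⟩
  intro H
  have hπtop : π (⊤ : C) = ⊤ := by
    rw [← htop, aux_pi_i hinj hinf hπ]
  have hHtop : H ∈ {H' : StoneSp B | π (⊤ : C) ∈ H'.1} := by
    rw [hπtop]
    obtain ⟨b₀, hb₀⟩ := H.2.1
    exact H.2.2.1 _ hb₀ _ le_top
  rw [← himg ⊤] at hHtop
  obtain ⟨G, _, hG⟩ := hHtop
  exact ⟨G, hG⟩
end

section
/- Let F = {i_{αβ} : B_α → B_β : α ≤ β < λ} be a complete iteration system and let A ⊆ T(F) be an antichain such that {f(α) : f ∈ A} is an antichain in B_α for some α < λ. Then the pointwise supremum ⋁̃A is the supremum of A in RO(T(F)); equivalently, every thread g ∈ T(F) with 0 < g ≤ ⋁̃A (pointwise) is compatible in T(F) with some f ∈ A, i.e. there is a nonzero thread h with h ≤ f and h ≤ g. -/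
/-- A complete iteration system of complete Boolean algebras indexed by `ι`:
regular embeddings `emb : B a → B b` for `a ≤ b` (injective Boolean algebra
homomorphisms preserving arbitrary suprema) which commute and are the identity
on the diagonal. -/
structure IterSys (ι : Type*) [Preorder ι] where
  B : ι → Type*
  cba : ∀ a, CompleteBooleanAlgebra (B a)
  emb : ∀ {a b : ι}, a ≤ b → B a → B b
  emb_refl : ∀ (a : ι) (x : B a), emb (le_refl a) x = x
  emb_trans : ∀ {a b c : ι} (hab : a ≤ b) (hbc : b ≤ c) (x : B a),
    emb hbc (emb hab x) = emb (hab.trans hbc) x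
  emb_inj : ∀ {a b : ι} (h : a ≤ b), Function.Injective (emb h)
  emb_sSup : ∀ {a b : ι} (h : a ≤ b) (S : Set (B a)), emb h (sSup S) = sSup (emb h '' S)
  emb_inf : ∀ {a b : ι} (h : a ≤ b) (x y : B a), emb h (x ⊓ y) = emb h x ⊓ emb h y
  emb_compl : ∀ {a b : ι} (h : a ≤ b) (x : B a), emb h xᶜ = (emb h x)ᶜ
  emb_top : ∀ {a b : ι} (h : a ≤ b), emb h (⊤ : B a) = (⊤ : B b)

attribute [instance] IterSys.cba

namespace IterSys

variable {ι : Type*} [Preorder ι] (F : IterSys ι)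

/-- The retraction `π_{a b}` associated to the regular embedding `i_{a b}`. -/
def ret {a b : ι} (h : a ≤ b) (c : F.B b) : F.B a :=
  sInf {x : F.B a | c ≤ F.emb h x}

/-- A thread of the iteration system (an element of the inverse limit `T(F)`). -/
def IsThread (f : ∀ a, F.B a) : Prop :=
  ∀ {a b : ι} (h : a ≤ b), F.ret h (f b) = f a

/-- A constant thread (an element of the direct limit `C(F)`). -/
def IsConstThread (f : ∀ a, F.B a) : Prop :=
  F.IsThread f ∧ ∃ a : ι, ∀ (b : ι) (h : a ≤ b), f b = F.emb h (f a)

/-- The pointwise order on threads. -/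
def ThreadLE (f g : ∀ a, F.B a) : Prop := ∀ a, f a ≤ g a

/-- A thread is nonzero if some (equivalently, cofinally many) of its coordinates
are nonzero. -/
def NonzeroThread (f : ∀ a, F.B a) : Prop := ∃ a, f a ≠ ⊥

/-- Two threads are compatible in `T(F)` if some nonzero thread lies below both. -/
def Compat (f g : ∀ a, F.B a) : Prop :=
  ∃ h, F.IsThread h ∧ F.NonzeroThread h ∧ F.ThreadLE h f ∧ F.ThreadLE h g

/-- Two constant threads are compatible in `C(F)` if some nonzero constant thread
lies below both. -/
def ConstCompat (f g : ∀ a, F.B a) : Prop :=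
  ∃ h, F.IsConstThread h ∧ F.NonzeroThread h ∧ F.ThreadLE h f ∧ F.ThreadLE h g

end IterSys

namespace IterSys

variable {ι : Type*} [Preorder ι] (F : IterSys ι)

lemma emb_mono {a b : ι} (h : a ≤ b) {x y : F.B a} (hxy : x ≤ y) :
    F.emb h x ≤ F.emb h y := by
  have : F.emb h x ⊓ F.emb h y = F.emb h x := by
    rw [← F.emb_inf, inf_eq_left.mpr hxy]
  exact inf_eq_left.mp this

lemma emb_le_emb_iff {a b : ι} (h : a ≤ b) {x y : F.B a} :
    F.emb h x ≤ F.emb h y ↔ x ≤ y := by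
  refine ⟨fun hxy => ?_, fun hxy => F.emb_mono h hxy⟩
  have : F.emb h (x ⊓ y) = F.emb h x := by
    rw [F.emb_inf, inf_eq_left.mpr hxy]
  exact inf_eq_left.mp (F.emb_inj h this)

lemma emb_bot {a b : ι} (h : a ≤ b) : F.emb h (⊥ : F.B a) = ⊥ := by
  have := F.emb_sSup h ∅
  simpa using this

lemma emb_sup {a b : ι} (h : a ≤ b) (x y : F.B a) :
    F.emb h (x ⊔ y) = F.emb h x ⊔ F.emb h y := by
  have := F.emb_sSup h {x, y}
  simpa [Set.image_pair] using this

lemma emb_himp {a b : ι} (h : a ≤ b) (x y : F.B a) :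
    F.emb h (x ⇨ y) = F.emb h x ⇨ F.emb h y := by
  rw [himp_eq, himp_eq, F.emb_sup, F.emb_compl]

lemma emb_sInf {a b : ι} (h : a ≤ b) (S : Set (F.B a)) :
    F.emb h (sInf S) = sInf (F.emb h '' S) := by
  apply compl_injective
  rw [← F.emb_compl h, compl_sInf', compl_sInf', F.emb_sSup, Set.image_image,
    Set.image_image]
  congr 1
  ext x
  simp [F.emb_compl]

lemma ret_le_iff {a b : ι} (h : a ≤ b) {c : F.B b} {x : F.B a} :
    F.ret h c ≤ x ↔ c ≤ F.emb h x := by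
  constructor
  · intro hx
    have hc : c ≤ F.emb h (F.ret h c) := by
      rw [ret, F.emb_sInf]
      apply le_sInf
      rintro _ ⟨y, hy, rfl⟩
      exact hy
    exact hc.trans (F.emb_mono h hx)
  · intro hx
    exact sInf_le hx

lemma le_emb_ret {a b : ι} (h : a ≤ b) (c : F.B b) : c ≤ F.emb h (F.ret h c) :=
  (F.ret_le_iff h).mp le_rfl

lemma ret_mono {a b : ι} (h : a ≤ b) {c d : F.B b} (hcd : c ≤ d) :
    F.ret h c ≤ F.ret h d :=
  (F.ret_le_iff h).mpr (hcd.trans (F.le_emb_ret h d))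

lemma ret_emb {a b : ι} (h : a ≤ b) (x : F.B a) : F.ret h (F.emb h x) = x := by
  apply le_antisymm
  · exact (F.ret_le_iff h).mpr le_rfl
  · apply le_sInf
    intro y hy
    exact (F.emb_le_emb_iff h).mp hy

lemma ret_sSup {a b : ι} (h : a ≤ b) (S : Set (F.B b)) :
    F.ret h (sSup S) = sSup (F.ret h '' S) := by
  apply eq_of_forall_ge_iff
  intro y
  simp only [F.ret_le_iff, sSup_le_iff, Set.forall_mem_image]

lemma ret_comp {a b c : ι} (hab : a ≤ b) (hbc : b ≤ c) (x : F.B c) :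
    F.ret hab (F.ret hbc x) = F.ret (hab.trans hbc) x := by
  apply eq_of_forall_ge_iff
  intro y
  rw [F.ret_le_iff, F.ret_le_iff, F.ret_le_iff, F.emb_trans]

lemma ret_bot_iff {a b : ι} (h : a ≤ b) {c : F.B b} : F.ret h c = ⊥ ↔ c = ⊥ := by
  constructor
  · intro hc
    have := F.le_emb_ret h c
    rw [hc, F.emb_bot] at this
    exact le_bot_iff.mp this
  · rintro rfl
    apply le_bot_iff.mp
    rw [F.ret_le_iff, F.emb_bot]

lemma ret_emb_inf {a b : ι} (h : a ≤ b) (x : F.B a) (c : F.B b) :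
    F.ret h (F.emb h x ⊓ c) = x ⊓ F.ret h c := by
  apply eq_of_forall_ge_iff
  intro y
  rw [F.ret_le_iff, inf_comm (F.emb h x) c, ← le_himp_iff, ← F.emb_himp,
    ← F.ret_le_iff, le_himp_iff, inf_comm]

end IterSys

/-- Let `F` be a complete iteration system and `A ⊆ T(F)` an antichain
such that `{f α : f ∈ A}` is an antichain in `B α` for some `α`.  Then the pointwise
supremum `⋁̃A` is the supremum of `A` in `RO(T(F))`: it is a thread, and every
nonzero thread `g` below `⋁̃A` is compatible in `T(F)` with some `f ∈ A`. -/
theorem stmt8 {ι : Type*} [LinearOrder ι] (F : IterSys ι)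
    (A : Set (∀ a, F.B a)) (hA : ∀ f ∈ A, F.IsThread f)
    (hAanti : ∀ f ∈ A, ∀ g ∈ A, f ≠ g → ¬ F.Compat f g)
    (α : ι) (hα : ∀ f ∈ A, ∀ g ∈ A, f ≠ g → f α ⊓ g α = ⊥) :
    F.IsThread (fun a => sSup {x : F.B a | ∃ f ∈ A, x = f a}) ∧
    ∀ g : ∀ a, F.B a, F.IsThread g → F.NonzeroThread g →
      (∀ a, g a ≤ sSup {x : F.B a | ∃ f ∈ A, x = f a}) →
      ∃ f ∈ A, F.Compat f g := by
  constructor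
  · intro a b hab
    rw [F.ret_sSup]
    congr 1
    ext x
    simp only [Set.mem_image, Set.mem_setOf_eq]
    constructor
    · rintro ⟨_, ⟨f, hf, rfl⟩, rfl⟩
      exact ⟨f, hf, hA f hf hab⟩
    · rintro ⟨f, hf, rfl⟩
      exact ⟨f b, ⟨f, hf, rfl⟩, hA f hf hab⟩
  · intro g hg hgnz hgle
    have hgα : g α ≠ ⊥ := by
      obtain ⟨a, ha⟩ := hgnz
      rcases le_total a α with hcmp | hcmp
      · intro hb
        apply ha
        rw [← hg hcmp, hb, (F.ret_bot_iff hcmp).mpr rfl]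
      · intro hb
        apply ha
        have := hg hcmp
        rw [hb] at this
        exact (F.ret_bot_iff hcmp).mp this
    obtain ⟨f, hfA, hfα⟩ : ∃ f ∈ A, g α ⊓ f α ≠ ⊥ := by
      by_contra hcon
      push_neg at hcon
      apply hgα
      apply le_bot_iff.mp
      have h1 : g α = g α ⊓ sSup {x : F.B α | ∃ f ∈ A, x = f α} :=
        (inf_eq_left.mpr (hgle α)).symm
      rw [h1, inf_sSup_eq]
      apply iSup₂_le
      rintro x ⟨f, hf, rfl⟩
      rw [hcon f hf]
    -- the witnessing thread
    classical
    set h : ∀ a, F.B a := fun a =>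
      if hle : α ≤ a then g a ⊓ F.emb hle (f α)
      else F.ret (le_of_not_ge hle) (g α ⊓ f α) with hdef
    have hhα : h α = g α ⊓ f α := by
      rw [hdef]
      simp only [dif_pos (le_refl α), F.emb_refl]
    have hupper : ∀ (a b : ι) (hab : a ≤ b) (hαa : α ≤ a) (hαb : α ≤ b),
        F.ret hab (g b ⊓ F.emb hαb (f α)) = g a ⊓ F.emb hαa (f α) := by
      intro a b hab hαa hαb
      have e : F.emb hαb (f α) = F.emb hab (F.emb hαa (f α)) :=
        (F.emb_trans hαa hab (f α)).symm
      rw [e, inf_comm (g b), F.ret_emb_inf, hg hab, inf_comm]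
    have hle_f : ∀ (a : ι) (hαa : α ≤ a), g a ⊓ F.emb hαa (f α) ≤ f a := by
      intro a hαa
      have h1 : g a ⊓ F.emb hαa (f α) ≤
          sSup {x : F.B a | ∃ f' ∈ A, x = f' a} ⊓ F.emb hαa (f α) :=
        inf_le_inf_right _ (hgle a)
      rw [sSup_inf_eq] at h1
      refine h1.trans (iSup₂_le ?_)
      rintro x ⟨f', hf', rfl⟩
      by_cases hff : f' = f
      · subst hff
        exact inf_le_left
      · have h2 : f' a ≤ F.emb hαa (f' α) := by
          rw [← hA f' hf' hαa]
          exact F.le_emb_ret hαa _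
        have hd : f' a ⊓ F.emb hαa (f α) ≤ ⊥ := by
          calc f' a ⊓ F.emb hαa (f α) ≤ F.emb hαa (f' α) ⊓ F.emb hαa (f α) :=
                inf_le_inf_right _ h2
            _ = F.emb hαa (f' α ⊓ f α) := (F.emb_inf hαa _ _).symm
            _ = ⊥ := by rw [hα f' hf' f hfA hff, F.emb_bot]
        exact hd.trans bot_le
    refine ⟨f, hfA, h, ?_, ⟨α, ?_⟩, ?_, ?_⟩
    · -- IsThread h
      intro a b hab
      by_cases hαa : α ≤ a
      · have hαb : α ≤ b := hαa.trans hab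
        rw [hdef]
        simp only [dif_pos hαa, dif_pos hαb]
        exact hupper a b hab hαa hαb
      · by_cases hαb : α ≤ b
        · have haα : a ≤ α := le_of_not_ge hαa
          rw [hdef]
          simp only [dif_neg hαa, dif_pos hαb]
          calc F.ret hab (g b ⊓ F.emb hαb (f α))
              = F.ret haα (F.ret hαb (g b ⊓ F.emb hαb (f α))) := by
                rw [F.ret_comp haα hαb]
            _ = F.ret haα (g α ⊓ f α) := by
                rw [hupper α b hαb (le_refl α) hαb, F.emb_refl]
        · have haα : a ≤ α := le_of_not_ge hαa
          have hbα : b ≤ α := le_of_not_ge hαb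
          rw [hdef]
          simp only [dif_neg hαa, dif_neg hαb]
          exact F.ret_comp hab hbα _
    · -- nonzero
      rw [hhα]
      intro hb
      exact hfα (by rw [hb])
    · -- h ≤ f
      intro a
      rw [hdef]
      by_cases hαa : α ≤ a
      · simp only [dif_pos hαa]
        exact hle_f a hαa
      · simp only [dif_neg hαa]
        have := F.ret_mono (le_of_not_ge hαa) (inf_le_right : g α ⊓ f α ≤ f α)
        rwa [hA f hfA (le_of_not_ge hαa)] at this
    · -- h ≤ g
      intro a
      rw [hdef]
      by_cases hαa : α ≤ a
      · simp only [dif_pos hαa]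
        exact inf_le_left
      · simp only [dif_neg hαa]
        have := F.ret_mono (le_of_not_ge hαa) (inf_le_left : g α ⊓ f α ≤ g α)
        rwa [hg (le_of_not_ge hαa)] at this
end

section
/- (Fodor) Let X be an uncountable set. The club filter CF_X is normal: the diagonal intersection Δ_{a∈X} C_a = {z ∈ 𝒫(X) : ∀a ∈ z, z ∈ C_a} of any X-indexed family of clubs C_a on 𝒫(X) contains a club on 𝒫(X). Equivalently, every function g : 𝒫(X) → X which is regressive on a stationary set S (i.e. g(Y) ∈ Y for all Y ∈ S) is constant on a stationary subset of S. -/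
/-- `C` is a club on `𝒫(X)`: the set of subsets of `X` closed under some function
`f : X^{<ω} → X` (finite sequences are encoded as lists). -/
def IsClubOn (X : Type*) (C : Set (Set X)) : Prop :=
  ∃ f : List X → X, C = {Y : Set X | ∀ l : List X, (∀ x ∈ l, x ∈ Y) → f l ∈ Y}

/-- `S` is stationary on `𝒫(X)`: it meets every club on `𝒫(X)`. -/
def IsStationaryOn (X : Type*) (S : Set (Set X)) : Prop :=
  ∀ C : Set (Set X), IsClubOn X C → (S ∩ C).Nonempty

/-- The club filter on `𝒫(X)`: the collection of subsets of `𝒫(X)` containing a club. -/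
def ClubFilterOn (X : Type*) : Set (Set (Set X)) :=
  {A : Set (Set X) | ∃ C : Set (Set X), IsClubOn X C ∧ C ⊆ A}

/-- Fodor: For an uncountable set `X`, the club filter on `𝒫(X)` is
normal: the diagonal intersection `Δ_{a∈X} C a = {z : ∀ a ∈ z, z ∈ C a}` of any
`X`-indexed family of clubs contains a club.  Equivalently, every function
`g : 𝒫(X) → X` which is regressive on a stationary set `S` is constant on a
stationary subset of `S`. -/
theorem stmt15 (X : Type*) [Uncountable X] :
    (∀ C : X → Set (Set X), (∀ a : X, IsClubOn X (C a)) →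
      ∃ D : Set (Set X), IsClubOn X D ∧ D ⊆ {z : Set X | ∀ a ∈ z, z ∈ C a}) ∧
    (∀ (S : Set (Set X)) (g : Set X → X), IsStationaryOn X S →
      (∀ Y ∈ S, g Y ∈ Y) →
      ∃ x : X, IsStationaryOn X {Y : Set X | Y ∈ S ∧ g Y = x}) := by
  have part1 : ∀ C : X → Set (Set X), (∀ a : X, IsClubOn X (C a)) →
      ∃ D : Set (Set X), IsClubOn X D ∧ D ⊆ {z : Set X | ∀ a ∈ z, z ∈ C a} := by
    intro C hC
    choose f hf using hC
    set F : List X → X := fun l => match l with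
      | [] => Classical.arbitrary X
      | a :: t => f a t with hF
    refine ⟨{Y : Set X | ∀ l : List X, (∀ x ∈ l, x ∈ Y) → F l ∈ Y}, ⟨F, rfl⟩, ?_⟩
    intro z hz a ha
    rw [hf a]
    intro l hl
    have := hz (a :: l) (by
      intro x hx
      rcases List.mem_cons.mp hx with h | h
      · exact h ▸ ha
      · exact hl x h)
    exact this
  refine ⟨part1, ?_⟩
  intro S g hS hreg
  by_contra h
  push_neg at h
  have h' : ∀ x : X, ∃ C, IsClubOn X C ∧ {Y : Set X | Y ∈ S ∧ g Y = x} ∩ C = ∅ := by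
    intro x
    have hx := h x
    unfold IsStationaryOn at hx
    push_neg at hx
    obtain ⟨C, hC, hne⟩ := hx
    exact ⟨C, hC, hne⟩
  choose C hC hCe using h'
  obtain ⟨D, hD, hDsub⟩ := part1 C hC
  obtain ⟨Y, hYS, hYD⟩ := hS D hD
  have hY : Y ∈ {Y : Set X | Y ∈ S ∧ g Y = g Y} ∩ C (g Y) :=
    ⟨⟨hYS, rfl⟩, hDsub hYD (g Y) (hreg Y hYS)⟩
  exact Set.eq_empty_iff_forall_notMem.mp (hCe (g Y)) Y hY
end

section
/- (Ulam) Let κ be an infinite cardinal. Then every stationary subset S of κ⁺ (stationary in the classical sense) can be partitioned into κ⁺ many pairwise disjoint stationary subsets of κ⁺. -/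
open Cardinal Set

universe u


/-- `C` is a club on `δ` in the classical sense: a set of ordinals `< δ`, unbounded
in `δ` and closed under suprema of its nonempty subsets bounded below `δ`. -/
def IsClassicalClub (δ : Ordinal) (C : Set Ordinal) : Prop :=
  (∀ x ∈ C, x < δ) ∧ (∀ x < δ, ∃ y ∈ C, x ≤ y) ∧
  ∀ T ⊆ C, T.Nonempty → sSup T < δ → sSup T ∈ C

/-- `S` is stationary on `δ` in the classical sense: it meets every classical club. -/
def IsClassicalStationary (δ : Ordinal) (S : Set Ordinal) : Prop :=
  ∀ C : Set Ordinal, IsClassicalClub δ C → (S ∩ C).Nonempty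

lemma mySup_lt {δ : Ordinal.{u}} {κ : Cardinal.{u}} (hcof : κ < δ.cof)
    (s : Set Ordinal.{u}) (hs : s ⊆ Set.Iio δ)
    (hcard : #s ≤ Cardinal.lift.{u+1} κ) : sSup s < δ := by
  have hsm : Small.{u} s := small_subset hs
  have hr : Set.range (fun i : Shrink.{u} s => (((equivShrink s).symm i : s) : Ordinal)) = s := by
    ext x
    constructor
    · rintro ⟨i, rfl⟩; exact ((equivShrink s).symm i).2
    · intro hx; exact ⟨equivShrink s ⟨x, hx⟩, by simp⟩
  have : sSup s = ⨆ i : Shrink.{u} s, (((equivShrink s).symm i : s) : Ordinal) := by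
    conv_lhs => rw [← hr]
    exact sSup_range
  rw [this]
  apply Ordinal.iSup_lt_ord
  · have h2 : Cardinal.lift.{u+1} #(Shrink.{u} s) = #s := lift_mk_shrink'' s
    have : Cardinal.lift.{u+1} #(Shrink.{u} s) ≤ Cardinal.lift.{u+1} κ := by rw [h2]; exact hcard
    exact lt_of_le_of_lt (Cardinal.lift_le.mp this) hcof
  · intro i; exact hs ((equivShrink s).symm i).2

lemma club_biInter {δ : Ordinal.{u}} {κ : Cardinal.{u}} (hκ : ℵ₀ ≤ κ) (hcof : κ < δ.cof)
    (O : Set Ordinal.{u}) (hOne : O.Nonempty) (hOcard : #O ≤ Cardinal.lift.{u+1} κ)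
    (C : Ordinal → Set Ordinal) (hC : ∀ ξ ∈ O, IsClassicalClub δ (C ξ)) :
    IsClassicalClub δ (⋂ ξ ∈ O, C ξ) := by
  obtain ⟨ξ₀, hξ₀⟩ := hOne
  have hδlim : Order.IsSuccLimit δ := Ordinal.aleph0_le_cof.mp (hκ.trans hcof.le)
  -- the "next element" function
  set c : Ordinal → Ordinal → Ordinal := fun ξ z => sInf {y | y ∈ C ξ ∧ z ≤ y} with hc
  have hcmem : ∀ ξ ∈ O, ∀ z < δ, c ξ z ∈ C ξ ∧ z ≤ c ξ z := by
    intro ξ hξ z hz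
    have hne : {y | y ∈ C ξ ∧ z ≤ y}.Nonempty := by
      obtain ⟨y, hy1, hy2⟩ := (hC ξ hξ).2.1 z hz
      exact ⟨y, hy1, hy2⟩
    exact csInf_mem hne
  set g : Ordinal → Ordinal := fun z => sSup ((fun ξ => c ξ z) '' O) + 1 with hg
  have hkey : ∀ z < δ, (∀ ξ ∈ O, c ξ z < g z) ∧ z < g z ∧ g z < δ := by
    intro z hz
    have him : ((fun ξ => c ξ z) '' O) ⊆ Set.Iio δ := by
      rintro _ ⟨ξ, hξ, rfl⟩
      exact (hC ξ hξ).1 _ (hcmem ξ hξ z hz).1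
    have hsup : sSup ((fun ξ => c ξ z) '' O) < δ :=
      mySup_lt hcof _ him ((mk_image_le).trans hOcard)
    have hbdd : BddAbove ((fun ξ => c ξ z) '' O) := ⟨δ, fun y hy => (him hy).le⟩
    have hlt : ∀ ξ ∈ O, c ξ z < g z := by
      intro ξ hξ
      have : c ξ z ≤ sSup ((fun ξ => c ξ z) '' O) := le_csSup hbdd ⟨ξ, hξ, rfl⟩
      calc c ξ z ≤ _ := this
        _ < g z := lt_add_one _
    refine ⟨hlt, ?_, ?_⟩
    · exact lt_of_le_of_lt (hcmem ξ₀ hξ₀ z hz).2 (hlt ξ₀ hξ₀)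
    · have := hδlim.succ_lt hsup
      rwa [← Ordinal.add_one_eq_succ] at this
  constructor
  · intro x hx
    exact (hC ξ₀ hξ₀).1 x (Set.mem_iInter₂.mp hx ξ₀ hξ₀)
  constructor
  · -- unboundedness
    intro x hx
    set seq : ℕ → Ordinal := fun n => g^[n] x with hseq
    have hseqsucc : ∀ n, seq (n+1) = g (seq n) := by
      intro n; simp [hseq, Function.iterate_succ_apply']
    have hseqlt : ∀ n, seq n < δ := by
      intro n
      induction n with
      | zero => simpa [hseq] using hx
      | succ n ih => rw [hseqsucc]; exact ((hkey _ ih).2.2)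
    have hseqmono : ∀ n, seq n < seq (n+1) := by
      intro n; rw [hseqsucc]; exact (hkey _ (hseqlt n)).2.1
    have hrange_sub : Set.range seq ⊆ Set.Iio δ := by rintro _ ⟨n, rfl⟩; exact hseqlt n
    have hrange_card : #(Set.range seq) ≤ Cardinal.lift.{u+1} κ := by
      have h1 : #(Set.range seq) ≤ ℵ₀ := by
        have := Cardinal.mk_range_le_lift (f := seq)
        rwa [Cardinal.lift_id'.{0}, Cardinal.mk_nat, Cardinal.lift_aleph0] at this
      have h2 : (ℵ₀ : Cardinal) ≤ Cardinal.lift.{u+1} κ := by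
        rw [Cardinal.aleph0_le_lift]; exact hκ
      exact h1.trans h2
    set y := sSup (Set.range seq) with hy
    have hylt : y < δ := mySup_lt hcof _ hrange_sub hrange_card
    have hbddy : BddAbove (Set.range seq) := ⟨δ, fun a ha => (hrange_sub ha).le⟩
    have hxy : x ≤ y := le_csSup hbddy ⟨0, rfl⟩
    refine ⟨y, ?_, hxy⟩
    apply Set.mem_iInter₂.mpr
    intro ξ hξ
    set T := Set.range (fun n => c ξ (seq n)) with hT
    have hTsub : T ⊆ C ξ := by rintro _ ⟨n, rfl⟩; exact (hcmem ξ hξ _ (hseqlt n)).1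
    have hTbdd : BddAbove T := ⟨δ, by rintro _ ⟨n, rfl⟩; exact ((hC ξ hξ).1 _ (hcmem ξ hξ _ (hseqlt n)).1).le⟩
    have hTsup : sSup T = y := by
      apply le_antisymm
      · apply csSup_le (Set.range_nonempty _)
        rintro _ ⟨n, rfl⟩
        have h1 : c ξ (seq n) < seq (n+1) := by
          rw [hseqsucc]; exact (hkey _ (hseqlt n)).1 ξ hξ
        exact h1.le.trans (le_csSup hbddy ⟨n+1, rfl⟩)
      · apply csSup_le (Set.range_nonempty _)
        rintro _ ⟨n, rfl⟩
        exact ((hcmem ξ hξ _ (hseqlt n)).2).trans (le_csSup hTbdd ⟨n, rfl⟩)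
    have := (hC ξ hξ).2.2 T hTsub (Set.range_nonempty _) (hTsup ▸ hylt)
    rwa [hTsup] at this
  · -- closure
    intro T hT hTne hTsup
    apply Set.mem_iInter₂.mpr
    intro ξ hξ
    exact (hC ξ hξ).2.2 T (fun t ht => Set.mem_iInter₂.mp (hT ht) ξ hξ) hTne hTsup

lemma stat_mono {δ : Ordinal.{u}} {S S' : Set Ordinal.{u}} (h : S ⊆ S')
    (hS : IsClassicalStationary δ S) : IsClassicalStationary δ S' := by
  intro C hC
  obtain ⟨x, hx1, hx2⟩ := hS C hC
  exact ⟨x, h hx1, hx2⟩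

lemma club_tail {δ : Ordinal.{u}} (hδ : Order.IsSuccLimit δ) {α : Ordinal} (hα : α < δ) :
    IsClassicalClub δ {y | α < y ∧ y < δ} := by
  refine ⟨fun x hx => hx.2, ?_, ?_⟩
  · intro x hx
    refine ⟨max (α + 1) x, ⟨?_, ?_⟩, le_max_right _ _⟩
    · exact lt_of_lt_of_le (lt_add_one α) (le_max_left _ _)
    · apply max_lt _ hx
      have := hδ.succ_lt hα
      rwa [← Ordinal.add_one_eq_succ] at this
  · intro T hT ⟨t, ht⟩ hsup
    have hbdd : BddAbove T := ⟨δ, fun a ha => (hT ha).2.le⟩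
    exact ⟨lt_of_lt_of_le (hT ht).1 (le_csSup hbdd ht), hsup⟩

lemma stat_inter_club {δ : Ordinal.{u}} {κ : Cardinal.{u}} (hκ : ℵ₀ ≤ κ) (hcof : κ < δ.cof)
    {S C : Set Ordinal.{u}} (hS : IsClassicalStationary δ S) (hC : IsClassicalClub δ C) :
    IsClassicalStationary δ (S ∩ C) := by
  intro D hD
  set C' : Ordinal → Set Ordinal := fun ξ => if ξ = 0 then C else D with hC'
  have hcard : #({0, 1} : Set Ordinal.{u}) ≤ Cardinal.lift.{u+1} κ := by
    have h1 : #({0, 1} : Set Ordinal.{u}) < ℵ₀ :=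
      ((Set.finite_singleton _).insert _).lt_aleph0
    have h2 : (ℵ₀ : Cardinal) ≤ Cardinal.lift.{u+1} κ := by
      rw [Cardinal.aleph0_le_lift]; exact hκ
    exact h1.le.trans h2
  have hclub : IsClassicalClub δ (⋂ ξ ∈ ({0, 1} : Set Ordinal), C' ξ) := by
    apply club_biInter hκ hcof _ ⟨0, by simp⟩ hcard
    intro ξ hξ
    rcases hξ with rfl | hξ
    · simpa [hC'] using hC
    · simp only [Set.mem_singleton_iff] at hξ
      subst hξ
      simpa [hC'] using hD
  obtain ⟨x, hxS, hxI⟩ := hS _ hclub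
  have hx0 : x ∈ C' 0 := Set.mem_iInter₂.mp hxI 0 (by simp)
  have hx1 : x ∈ C' 1 := Set.mem_iInter₂.mp hxI 1 (by simp)
  simp only [hC', if_pos rfl, if_neg one_ne_zero] at hx0 hx1
  exact ⟨x, ⟨hxS, hx0⟩, hx1⟩

lemma exists_stat_piece {δ : Ordinal.{u}} {κ : Cardinal.{u}} (hκ : ℵ₀ ≤ κ) (hcof : κ < δ.cof)
    (O : Set Ordinal.{u}) (hOne : O.Nonempty) (hOcard : #O ≤ Cardinal.lift.{u+1} κ)
    (A : Ordinal → Set Ordinal) {S : Set Ordinal} (hS : IsClassicalStationary δ S)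
    (hcover : S ⊆ ⋃ ξ ∈ O, A ξ) : ∃ ξ ∈ O, IsClassicalStationary δ (S ∩ A ξ) := by
  by_contra h
  push_neg at h
  have h2 : ∀ ξ, ∃ D, ξ ∈ O → IsClassicalClub δ D ∧ S ∩ A ξ ∩ D = ∅ := by
    intro ξ
    by_cases hξ : ξ ∈ O
    · have := h ξ hξ
      rw [IsClassicalStationary] at this
      push_neg at this
      obtain ⟨D, hD1, hD2⟩ := this
      exact ⟨D, fun _ => ⟨hD1, hD2⟩⟩
    · exact ⟨∅, fun h' => absurd h' hξ⟩
  choose D hD using h2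
  have hclub : IsClassicalClub δ (⋂ ξ ∈ O, D ξ) :=
    club_biInter hκ hcof O hOne hOcard D (fun ξ hξ => (hD ξ hξ).1)
  obtain ⟨x, hxS, hxI⟩ := hS _ hclub
  obtain ⟨ξ, hξ, hxA⟩ := Set.mem_iUnion₂.mp (hcover hxS)
  have : x ∈ S ∩ A ξ ∩ D ξ := ⟨⟨hxS, hxA⟩, Set.mem_iInter₂.mp hxI ξ hξ⟩
  rw [(hD ξ hξ).2] at this
  exact this

/-- Ulam: Let `κ` be an infinite cardinal.  Every stationary subset
`S` of `κ⁺` can be partitioned into `κ⁺` many pairwise disjoint stationary subsets of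
`κ⁺` (the pieces are indexed by the ordinals below `κ⁺`). -/
theorem stmt19 (κ : Cardinal) (hκ : Cardinal.aleph0 ≤ κ)
    (S : Set Ordinal) (hS : S ⊆ Set.Iio (Order.succ κ).ord)
    (hstat : IsClassicalStationary (Order.succ κ).ord S) :
    ∃ T : Ordinal → Set Ordinal,
      (∀ i < (Order.succ κ).ord,
        IsClassicalStationary (Order.succ κ).ord (T i) ∧ T i ⊆ S) ∧
      (∀ i < (Order.succ κ).ord, ∀ j < (Order.succ κ).ord,
        i ≠ j → Disjoint (T i) (T j)) ∧
      S = ⋃ i ∈ Set.Iio (Order.succ κ).ord, T i := by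
  set δ := (Order.succ κ).ord with hδdef
  have hreg : (Order.succ κ).IsRegular := Cardinal.isRegular_succ hκ
  have hcof : κ < δ.cof := by rw [hδdef, hreg.cof_eq]; exact Order.lt_succ κ
  have hδlim : Order.IsSuccLimit δ := Cardinal.isSuccLimit_ord (hκ.trans (Order.le_succ κ))
  have hδpos : (0:Ordinal) < δ := hδlim.pos
  have hIioκ := Ordinal.mk_Iio_ordinal (Cardinal.ord κ)
  rw [Cardinal.card_ord] at hIioκ
  have hIioδ := Ordinal.mk_Iio_ordinal δ
  rw [hδdef, Cardinal.card_ord] at hIioδ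
  have hFex : ∀ β : Set.Iio δ, Nonempty (Set.Iio β.1 ↪ Set.Iio (Cardinal.ord κ)) := by
    intro β
    rw [← Cardinal.le_def, Ordinal.mk_Iio_ordinal, hIioκ, Cardinal.lift_le]
    exact Order.lt_succ_iff.mp (Cardinal.lt_ord.mp β.2)
  let F : ∀ β : Set.Iio δ, Set.Iio β.1 ↪ Set.Iio (Cardinal.ord κ) := fun β => (hFex β).some
  set A : Ordinal → Ordinal → Set Ordinal := fun ξ α =>
    {β | ∃ h : β < δ, ∃ hα : α < β, ((F ⟨β, h⟩ ⟨α, hα⟩ : Set.Iio (Cardinal.ord κ)) : Ordinal) = ξ}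
    with hA
  have hAdisj : ∀ ξ α α', α ≠ α' → ∀ β, β ∈ A ξ α → β ∈ A ξ α' → False := by
    rintro ξ α α' hne β ⟨h, hα, hF1⟩ ⟨h', hα', hF2⟩
    apply hne
    have h3 : F ⟨β, h⟩ ⟨α, hα⟩ = F ⟨β, h⟩ ⟨α', hα'⟩ :=
      Subtype.coe_injective (hF1.trans hF2.symm)
    exact congrArg Subtype.val ((F ⟨β, h⟩).injective h3)
  have hκordpos : (0:Ordinal) < Cardinal.ord κ := by
    rw [Cardinal.lt_ord]
    simpa using (aleph0_pos.trans_le hκ)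
  have hstep1 : ∀ α < δ, ∃ ξ ∈ Set.Iio (Cardinal.ord κ),
      IsClassicalStationary δ (S ∩ A ξ α) := by
    intro α hα
    have hS' : IsClassicalStationary δ (S ∩ {y | α < y ∧ y < δ}) :=
      stat_inter_club hκ hcof hstat (club_tail hδlim hα)
    have hcover : (S ∩ {y | α < y ∧ y < δ}) ⊆ ⋃ ξ ∈ Set.Iio (Cardinal.ord κ), A ξ α := by
      rintro β ⟨hβS, hαβ, hβδ⟩
      exact Set.mem_iUnion₂.mpr ⟨_, (F ⟨β, hβδ⟩ ⟨α, hαβ⟩).2, hβδ, hαβ, rfl⟩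
    obtain ⟨ξ, hξ, hstatξ⟩ :=
      exists_stat_piece hκ hcof (Set.Iio (Cardinal.ord κ)) ⟨0, hκordpos⟩ hIioκ.le (fun ξ => A ξ α) hS' hcover
    exact ⟨ξ, hξ, stat_mono (fun x hx => ⟨hx.1.1, hx.2⟩) hstatξ⟩
  set B : Ordinal → Set Ordinal :=
    fun ξ => {α | α < δ ∧ IsClassicalStationary δ (S ∩ A ξ α)} with hB
  have hBcover : Set.Iio δ ⊆ ⋃ ξ ∈ Set.Iio (Cardinal.ord κ), B ξ := by
    intro α hα
    obtain ⟨ξ, hξ, hst⟩ := hstep1 α hα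
    exact Set.mem_iUnion₂.mpr ⟨ξ, hξ, hα, hst⟩
  have hbig : ∃ ξ, #(Set.Iio δ) ≤ #(B ξ) := by
    by_contra h
    push_neg at h
    haveI : Nonempty (Set.Iio (Cardinal.ord κ)) := ⟨⟨0, hκordpos⟩⟩
    have hsup : ⨆ x : Set.Iio (Cardinal.ord κ), #(B x.1) ≤ #(Set.Iio (Cardinal.ord κ)) := by
      apply ciSup_le
      intro x
      have := h x.1
      rwa [hIioδ, Cardinal.lift_succ, Order.lt_succ_iff, ← hIioκ] at this
    have hle : #(Set.Iio δ) ≤ #(Set.Iio (Cardinal.ord κ)) := by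
      calc #(Set.Iio δ)
          ≤ #(⋃ ξ ∈ Set.Iio (Cardinal.ord κ), B ξ) := Cardinal.mk_le_mk_of_subset hBcover
        _ ≤ #(Set.Iio (Cardinal.ord κ)) * ⨆ x : Set.Iio (Cardinal.ord κ), #(B x.1) :=
            Cardinal.mk_biUnion_le _ _
        _ ≤ #(Set.Iio (Cardinal.ord κ)) * #(Set.Iio (Cardinal.ord κ)) :=
            mul_le_mul' le_rfl hsup
        _ = #(Set.Iio (Cardinal.ord κ)) :=
            Cardinal.mul_eq_self (by rw [hIioκ, Cardinal.aleph0_le_lift]; exact hκ)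
    rw [hIioδ, hIioκ, Cardinal.lift_le] at hle
    exact absurd (Order.succ_le_iff.mp hle) (lt_irrefl _)
  obtain ⟨ξ, hξbig⟩ := hbig
  have heex : Nonempty (Set.Iio δ ↪ B ξ) := (Cardinal.le_def _ _).mp hξbig
  let e : Set.Iio δ ↪ B ξ := heex.some
  have hBmem : ∀ j : Set.Iio δ,
      ((e j : Ordinal) < δ ∧ IsClassicalStationary δ (S ∩ A ξ (e j))) := fun j => (e j).2
  set piece : Set.Iio δ → Set Ordinal := fun j => S ∩ A ξ ((e j : B ξ) : Ordinal) with hpiece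
  have hpdisj : ∀ j j' : Set.Iio δ, j ≠ j' → ∀ x, x ∈ piece j → x ∈ piece j' → False := by
    intro j j' hne x hx hx'
    have hvne : ((e j : B ξ) : Ordinal) ≠ ((e j' : B ξ) : Ordinal) := by
      intro hval
      exact hne (e.injective (Subtype.coe_injective hval))
    exact hAdisj ξ _ _ hvne x hx.2 hx'.2
  set z0 : Set.Iio δ := ⟨0, hδpos⟩ with hz0
  set T : Ordinal → Set Ordinal := fun i =>
    if h : i < δ then
      (if i = 0 then S \ ⋃ (j : Set.Iio δ) (_ : j ≠ z0), piece j else piece ⟨i, h⟩)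
    else ∅ with hT
  have hT0 : T 0 = S \ ⋃ (j : Set.Iio δ) (_ : j ≠ z0), piece j := by
    rw [hT]; simp [hδpos]
  have hTne : ∀ i (h : i < δ), i ≠ 0 → T i = piece ⟨i, h⟩ := by
    intro i h h0; rw [hT]; simp [h, h0]
  have hTsubS : ∀ i, i < δ → T i ⊆ S := by
    intro i h
    by_cases h0 : i = 0
    · subst h0; rw [hT0]; exact Set.diff_subset
    · rw [hTne i h h0]; exact Set.inter_subset_left
  refine ⟨T, ?_, ?_, ?_⟩
  · intro i hi
    refine ⟨?_, hTsubS i hi⟩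
    by_cases h0 : i = 0
    · subst h0
      rw [hT0]
      apply stat_mono _ (hBmem z0).2
      intro x hx
      refine ⟨hx.1, ?_⟩
      intro hmem
      obtain ⟨j, hj⟩ := Set.mem_iUnion.mp hmem
      obtain ⟨hjne, hxj⟩ := Set.mem_iUnion.mp hj
      exact hpdisj z0 j (Ne.symm hjne) x hx hxj
    · rw [hTne i hi h0]
      exact (hBmem ⟨i, hi⟩).2
  · intro i hi j hj hij
    rw [Set.disjoint_left]
    intro x hxi hxj
    by_cases h0 : i = 0
    · subst h0
      have hj0 : j ≠ 0 := fun h => hij h.symm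
      rw [hT0] at hxi
      rw [hTne j hj hj0] at hxj
      apply hxi.2
      have hjne : (⟨j, hj⟩ : Set.Iio δ) ≠ z0 := fun h => hj0 (congrArg Subtype.val h)
      exact Set.mem_iUnion.mpr ⟨⟨j, hj⟩, Set.mem_iUnion.mpr ⟨hjne, hxj⟩⟩
    · by_cases hj0 : j = 0
      · subst hj0
        rw [hT0] at hxj
        rw [hTne i hi h0] at hxi
        apply hxj.2
        have hine : (⟨i, hi⟩ : Set.Iio δ) ≠ z0 := fun h => h0 (congrArg Subtype.val h)
        exact Set.mem_iUnion.mpr ⟨⟨i, hi⟩, Set.mem_iUnion.mpr ⟨hine, hxi⟩⟩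
      · rw [hTne i hi h0] at hxi
        rw [hTne j hj hj0] at hxj
        have : (⟨i, hi⟩ : Set.Iio δ) ≠ ⟨j, hj⟩ := fun h => hij (congrArg Subtype.val h)
        exact hpdisj _ _ this x hxi hxj
  · ext x
    rw [Set.mem_iUnion₂]
    constructor
    · intro hxS
      by_cases hx : ∃ j : Set.Iio δ, j ≠ z0 ∧ x ∈ piece j
      · obtain ⟨j, hjne, hxj⟩ := hx
        have hj0 : j.1 ≠ 0 := fun h => hjne (Subtype.ext h)
        refine ⟨j.1, j.2, ?_⟩
        rw [hTne j.1 j.2 hj0]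
        exact hxj
      · refine ⟨0, hδpos, ?_⟩
        rw [hT0]
        refine ⟨hxS, ?_⟩
        intro hmem
        obtain ⟨j, hj⟩ := Set.mem_iUnion.mp hmem
        obtain ⟨hjne, hxj⟩ := Set.mem_iUnion.mp hj
        exact hx ⟨j, hjne, hxj⟩
    · rintro ⟨i, hi, hx⟩
      exact hTsubS i hi hx
end
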